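/- Let E : B ⊆ V → ℝ be a C¹ function on an open ball B around 0 in a Banach space V, with E(0) a critical value, and suppose the Łojasiewicz–Simon inequality |E(f) − E(0)|^{1−α} ≤ C ‖δE_f‖ holds on B for some α ∈ (0, 1/2] and C > 0. If u : [0, ∞) → B is a C¹ gradient-flow trajectory in a Hilbert space H ⊇ V, satisfying ⟨u'(t), v⟩_H = −δE_{u(t)}(v) and E(u(t)) > E(0) for all t, then defining G(t) = (E(u(t)) − E(0))^α there holds G'(t) ≤ −(α/C) ‖u'(t)‖_H for all t ≥ 0. -/

import Mathlib

open RealInnerProductSpace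

/-- Łojasiewicz–Simon differential inequality along a gradient flow: if `E` satisfies
`|E(f) − E(0)|^{1−α} ≤ C ‖δE_f‖` on a ball around the critical point `0`, and `u` is a
gradient-flow trajectory with `⟪u'(t), v⟫ = −δE_{u(t)}(v)` and `E(u(t)) > E(0)`, then
`G(t) = (E(u(t)) − E(0))^α` satisfies `G'(t) ≤ −(α/C)‖u'(t)‖`. -/
theorem lojasiewicz_gradient_flow_decay
    {H : Type*} [NormedAddCommGroup H] [InnerProductSpace ℝ H]
    (ρ C α : ℝ) (hρ : 0 < ρ) (hC : 0 < C) (hα : α ∈ Set.Ioc (0 : ℝ) (1 / 2))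
    (E : H → ℝ) (dE : H → (H →L[ℝ] ℝ))
    (hdE : ∀ f ∈ Metric.ball (0 : H) ρ, HasFDerivAt E (dE f) f)
    (hcrit : dE 0 = 0)
    (hLoj : ∀ f ∈ Metric.ball (0 : H) ρ, |E f - E 0| ^ (1 - α) ≤ C * ‖dE f‖)
    (u u' : ℝ → H)
    (hu : ∀ t, 0 ≤ t → HasDerivAt u (u' t) t)
    (hflow : ∀ t, 0 ≤ t → ∀ v : H, ⟪u' t, v⟫ = -(dE (u t)) v)
    (hmem : ∀ t, 0 ≤ t → u t ∈ Metric.ball (0 : H) ρ)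
    (hgt : ∀ t, 0 ≤ t → E 0 < E (u t)) :
    ∀ t, 0 ≤ t →
      deriv (fun s => (E (u s) - E 0) ^ α) t ≤ -(α / C) * ‖u' t‖ := by
  intro t ht
  have hαpos : 0 < α := hα.1
  set d := E (u t) - E 0 with hd
  have hdpos : 0 < d := sub_pos.2 (hgt t ht)
  have hEu : HasDerivAt (fun s => E (u s)) ((dE (u t)) (u' t)) t :=
    (hdE (u t) (hmem t ht)).comp_hasDerivAt t (hu t ht)
  have hG : HasDerivAt (fun s => (E (u s) - E 0) ^ α)
      (α * d ^ (α - 1) * ((dE (u t)) (u' t))) t := by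
    have h1 : HasDerivAt (fun s => E (u s) - E 0) ((dE (u t)) (u' t)) t :=
      hEu.sub_const _
    have h2 := Real.hasDerivAt_rpow_const (x := d) (p := α) (Or.inl hdpos.ne')
    have h3 := h2.comp t h1
    convert h3 using 1
    all_goals rfl
  rw [hG.deriv]
  have hval : (dE (u t)) (u' t) = -‖u' t‖ ^ 2 := by
    have h := hflow t ht (u' t)
    rw [real_inner_self_eq_norm_sq] at h
    linarith
  have hnorm : ‖dE (u t)‖ = ‖u' t‖ := by
    have heq : dE (u t) = -(innerSL ℝ (u' t)) := by
      ext v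
      have h := hflow t ht v
      simp only [ContinuousLinearMap.neg_apply, innerSL_apply_apply]
      linarith
    rw [heq, norm_neg, innerSL_apply_norm]
  have hL := hLoj (u t) (hmem t ht)
  rw [abs_of_pos hdpos, hnorm] at hL
  have hnpos : 0 < ‖u' t‖ := by
    rcases (norm_nonneg (u' t)).lt_or_eq with h | h
    · exact h
    · exfalso
      rw [← h] at hL
      have := Real.rpow_pos_of_pos hdpos (1 - α)
      nlinarith
  have hinv : (C * ‖u' t‖)⁻¹ ≤ d ^ (α - 1) := by
    rw [show α - 1 = -(1 - α) by ring, Real.rpow_neg hdpos.le]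
    exact inv_anti₀ (Real.rpow_pos_of_pos hdpos _) hL
  have key : α / C * ‖u' t‖ ≤ α * d ^ (α - 1) * ‖u' t‖ ^ 2 := by
    calc α / C * ‖u' t‖ = α * (C * ‖u' t‖)⁻¹ * ‖u' t‖ ^ 2 := by
          field_simp
      _ ≤ α * d ^ (α - 1) * ‖u' t‖ ^ 2 := by gcongr
  rw [hval]
  have heq2 : α * d ^ (α - 1) * -‖u' t‖ ^ 2 = -(α * d ^ (α - 1) * ‖u' t‖ ^ 2) := by ring
  rw [heq2]
  linarith
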